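/- arXiv:2603.15962 — 4 statements merged into one kernel-verified Lean document; each statement's English description precedes it below -/
import Mathlib

section
/- For f, g ∈ L¹(ℝⁿ) and k ∈ ℤ, define B_k(f,g)(x) = ∫_{|y| < 2^{−k}} f(x−y) g(x+y) dy. Then ∫_{ℝⁿ} |B_k(f,g)(x)|^{1/2} dx ≲ 2^{−nk/2} ‖f‖_{L¹}^{1/2} ‖g‖_{L¹}^{1/2}, i.e. ‖B_k(f,g)‖_{L^{1/2}} ≲ 2^{−nk} ‖f‖_{L¹} ‖g‖_{L¹} with implicit constant depending only on n. -/
open MeasureTheory Set ENNReal Metric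

section Stmt6Aux

variable {n : ℕ}

private lemma lint_preimage {α : Type*} [MeasurableSpace α] {μ : Measure α} {T : α → α}
    (hT : MeasurePreserving T μ μ) {φ : α → ℝ≥0∞} (hφ : Measurable φ)
    {s : Set α} (hs : MeasurableSet s) :
    ∫⁻ x in T ⁻¹' s, φ (T x) ∂μ = ∫⁻ z in s, φ z ∂μ := by
  conv_rhs => rw [← hT.map_eq]
  rw [Measure.restrict_map hT.measurable hs, lintegral_map hφ hT.measurable]

private lemma lint_ball_translate {φ : EuclideanSpace ℝ (Fin n) → ℝ≥0∞} (hφ : Measurable φ)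
    (a : EuclideanSpace ℝ (Fin n)) (R : ℝ) :
    ∫⁻ w in ball (0 : EuclideanSpace ℝ (Fin n)) R, φ (a + w) = ∫⁻ z in ball a R, φ z := by
  have hpre : (fun w : EuclideanSpace ℝ (Fin n) => a + w) ⁻¹' ball a R
      = ball (0 : EuclideanSpace ℝ (Fin n)) R := by
    ext w
    simp [mem_ball, dist_eq_norm]
  rw [← hpre]
  exact lint_preimage (measurePreserving_add_left volume a) hφ measurableSet_ball

private lemma lint_double {φ : EuclideanSpace ℝ (Fin n) → ℝ≥0∞} (hφ : Measurable φ) (r : ℝ) :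
    ∫⁻ y in ball (0 : EuclideanSpace ℝ (Fin n)) r, φ (y + y) ≤
      ∫⁻ z in ball (0 : EuclideanSpace ℝ (Fin n)) (2 * r), φ z := by
  have hT : Measurable fun y : EuclideanSpace ℝ (Fin n) => (2:ℝ) • y := by fun_prop
  have hpre : (fun y : EuclideanSpace ℝ (Fin n) => (2:ℝ) • y) ⁻¹' ball 0 (2*r)
      = ball (0 : EuclideanSpace ℝ (Fin n)) r := by
    ext y
    simp only [mem_preimage, mem_ball, dist_zero_right, norm_smul, Real.norm_ofNat]
    constructor <;> intro h <;> linarith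
  calc ∫⁻ y in ball (0 : EuclideanSpace ℝ (Fin n)) r, φ (y + y)
      = ∫⁻ y in (fun y : EuclideanSpace ℝ (Fin n) => (2:ℝ) • y) ⁻¹' ball 0 (2*r),
          φ ((2:ℝ) • y) := by
        rw [hpre]; exact lintegral_congr fun y => by rw [two_smul]
    _ = ∫⁻ z in ball (0 : EuclideanSpace ℝ (Fin n)) (2*r), φ z
          ∂(Measure.map (fun y : EuclideanSpace ℝ (Fin n) => (2:ℝ) • y) volume) := by
        rw [Measure.restrict_map hT measurableSet_ball, lintegral_map hφ hT]
    _ ≤ ∫⁻ z in ball (0 : EuclideanSpace ℝ (Fin n)) (2*r), φ z := by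
        rw [Measure.map_addHaar_smul volume two_ne_zero, Measure.restrict_smul,
          lintegral_smul_measure]
        refine mul_le_of_le_one_left zero_le ?_
        rw [ENNReal.ofReal_le_one, abs_of_nonneg (by positivity)]
        rw [inv_le_one_iff₀]
        right; exact one_le_pow₀ one_le_two

private lemma stmt6_key (r : ℝ) (hr : 0 < r) (f g : EuclideanSpace ℝ (Fin n) → ℝ)
    (hf : Integrable f volume) (hg : Integrable g volume)
    (hmf : Measurable f) (hmg : Measurable g) :
    ∫⁻ x, ENNReal.ofReal
        (|∫ y in ball (0 : EuclideanSpace ℝ (Fin n)) r, f (x - y) * g (x + y)| ^ ((1:ℝ)/2)) ≤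
      (∫⁻ u, ENNReal.ofReal |f u|) ^ ((1:ℝ)/2) *
        ((volume (ball (0 : EuclideanSpace ℝ (Fin n)) (3*r))) *
          ∫⁻ u, ENNReal.ofReal |g u|) ^ ((1:ℝ)/2) := by
  set fe : EuclideanSpace ℝ (Fin n) → ℝ≥0∞ := fun u => ENNReal.ofReal |f u| with hfe
  set ge : EuclideanSpace ℝ (Fin n) → ℝ≥0∞ := fun u => ENNReal.ofReal |g u| with hge
  have hmfe : Measurable fe := by fun_prop
  have hmge : Measurable ge := by fun_prop
  set G : EuclideanSpace ℝ (Fin n) → ℝ≥0∞ :=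
    fun x => ∫⁻ y in ball (0 : EuclideanSpace ℝ (Fin n)) (3*r), ge (x + y) with hG
  set Bl : EuclideanSpace ℝ (Fin n) → ℝ≥0∞ :=
    fun x => ∫⁻ y in ball (0 : EuclideanSpace ℝ (Fin n)) r, fe (x - y) * ge (x + y) with hBl
  have hGm : Measurable G :=
    Measurable.lintegral_prod_right'
      (f := fun p : EuclideanSpace ℝ (Fin n) × EuclideanSpace ℝ (Fin n) => ge (p.1 + p.2))
      (by fun_prop)
  have hBlm : Measurable Bl :=
    Measurable.lintegral_prod_right'
      (f := fun p : EuclideanSpace ℝ (Fin n) × EuclideanSpace ℝ (Fin n) =>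
        fe (p.1 - p.2) * ge (p.1 + p.2)) (by fun_prop)
  have hgetot : (∫⁻ u, ge u) ≠ ∞ := by
    have : (∫⁻ u, ge u) = ENNReal.ofReal (∫ y, |g y|) :=
      (ofReal_integral_eq_lintegral_ofReal hg.abs
        (Filter.Eventually.of_forall fun x => abs_nonneg _)).symm
    rw [this]
    exact ENNReal.ofReal_ne_top
  have hGo : ∀ x, G x ≠ ∞ := by
    intro x
    refine ne_of_lt (lt_of_le_of_lt (setLIntegral_le_lintegral _ _) ?_)
    have : (∫⁻ y, ge (x + y)) = ∫⁻ u, ge u :=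
      (measurePreserving_add_left volume x).lintegral_comp hmge
    rw [this]
    exact hgetot.lt_top
  -- Step 1 : pointwise domination by Bl
  have step1 : ∀ x : EuclideanSpace ℝ (Fin n), ENNReal.ofReal
      (|∫ y in ball (0 : EuclideanSpace ℝ (Fin n)) r, f (x - y) * g (x + y)| ^ ((1:ℝ)/2))
        ≤ (Bl x) ^ ((1:ℝ)/2) := by
    intro x
    rw [← ENNReal.ofReal_rpow_of_nonneg (abs_nonneg _) (by norm_num)]
    refine ENNReal.rpow_le_rpow ?_ (by norm_num)
    by_cases hint : Integrable (fun y => f (x - y) * g (x + y))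
        (volume.restrict (ball (0 : EuclideanSpace ℝ (Fin n)) r))
    · calc ENNReal.ofReal |∫ y in ball (0 : EuclideanSpace ℝ (Fin n)) r, f (x - y) * g (x + y)|
          ≤ ENNReal.ofReal
            (∫ y in ball (0 : EuclideanSpace ℝ (Fin n)) r, |f (x - y) * g (x + y)|) := by
            refine ENNReal.ofReal_le_ofReal ?_
            have := norm_integral_le_integral_norm
              (μ := volume.restrict (ball (0 : EuclideanSpace ℝ (Fin n)) r))
              (fun y => f (x - y) * g (x + y))
            simpa only [Real.norm_eq_abs] using this
        _ = ∫⁻ y in ball (0 : EuclideanSpace ℝ (Fin n)) r,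
              ENNReal.ofReal |f (x - y) * g (x + y)| :=
            ofReal_integral_eq_lintegral_ofReal hint.abs
              (Filter.Eventually.of_forall fun y => abs_nonneg _)
        _ = Bl x := by
            refine lintegral_congr fun y => ?_
            rw [abs_mul, ENNReal.ofReal_mul (abs_nonneg _)]
    · rw [integral_undef hint]
      simp
  -- Cauchy-Schwarz step
  have hCS : ∫⁻ x, (Bl x) ^ ((1:ℝ)/2) ≤
      (∫⁻ x, Bl x * (G x)⁻¹) ^ ((1:ℝ)/2) * (∫⁻ x, G x) ^ ((1:ℝ)/2) := by
    have hpt : ∀ x : EuclideanSpace ℝ (Fin n), (Bl x) ^ ((1:ℝ)/2) ≤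
        (Bl x * (G x)⁻¹) ^ ((1:ℝ)/2) * (G x) ^ ((1:ℝ)/2) := by
      intro x
      by_cases hG0 : G x = 0
      · have hmx : Measurable fun y : EuclideanSpace ℝ (Fin n) => ge (x + y) := by fun_prop
        have h0 : (fun y : EuclideanSpace ℝ (Fin n) => ge (x + y))
            =ᵐ[volume.restrict (ball (0 : EuclideanSpace ℝ (Fin n)) (3*r))] 0 := by
          rw [← lintegral_eq_zero_iff hmx]
          exact hG0
        have h0' : (fun y : EuclideanSpace ℝ (Fin n) => ge (x + y))
            =ᵐ[volume.restrict (ball (0 : EuclideanSpace ℝ (Fin n)) r)] 0 :=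
          ae_restrict_of_ae_restrict_of_subset (ball_subset_ball (by linarith)) h0
        have hB0 : Bl x = 0 := by
          have heq : (fun y : EuclideanSpace ℝ (Fin n) => fe (x - y) * ge (x + y))
              =ᵐ[volume.restrict (ball (0 : EuclideanSpace ℝ (Fin n)) r)] 0 :=
            h0'.mono fun y hy => by simp only [Pi.zero_apply] at hy ⊢; rw [hy, mul_zero]
          calc Bl x = ∫⁻ y in ball (0 : EuclideanSpace ℝ (Fin n)) r, 0 :=
                lintegral_congr_ae heq
            _ = 0 := lintegral_zero
        rw [hB0, ENNReal.zero_rpow_of_pos (by norm_num)]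
        exact zero_le
      · conv_lhs => rw [show Bl x = Bl x * (G x)⁻¹ * G x from by
          rw [mul_assoc, ENNReal.inv_mul_cancel hG0 (hGo x), mul_one]]
        rw [ENNReal.mul_rpow_of_nonneg _ _ (by norm_num : (0:ℝ) ≤ 1/2)]
    calc ∫⁻ x, (Bl x) ^ ((1:ℝ)/2)
        ≤ ∫⁻ x, ((fun x => (Bl x * (G x)⁻¹) ^ ((1:ℝ)/2)) *
            (fun x => (G x) ^ ((1:ℝ)/2))) x := lintegral_mono fun x => hpt x
      _ ≤ (∫⁻ x, ((Bl x * (G x)⁻¹) ^ ((1:ℝ)/2)) ^ (2:ℝ)) ^ (1/(2:ℝ)) *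
            (∫⁻ x, ((G x) ^ ((1:ℝ)/2)) ^ (2:ℝ)) ^ (1/(2:ℝ)) := by
          refine ENNReal.lintegral_mul_le_Lp_mul_Lq volume ?_ ?_ ?_
          · constructor <;> norm_num
          · exact ((hBlm.mul hGm.inv).pow measurable_const).aemeasurable
          · exact (hGm.pow measurable_const).aemeasurable
      _ = (∫⁻ x, Bl x * (G x)⁻¹) ^ ((1:ℝ)/2) * (∫⁻ x, G x) ^ ((1:ℝ)/2) := by
          have h2 : ∀ a : ℝ≥0∞, (a ^ ((1:ℝ)/2)) ^ (2:ℝ) = a := by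
            intro a
            rw [← ENNReal.rpow_mul]
            norm_num
          simp_rw [h2]
  -- inner bound
  have innerb : ∀ u : EuclideanSpace ℝ (Fin n),
      ∫⁻ y in ball (0 : EuclideanSpace ℝ (Fin n)) r, ge (u + y + y) * (G (u + y))⁻¹ ≤ 1 := by
    intro u
    set Q := ∫⁻ z in ball (0 : EuclideanSpace ℝ (Fin n)) (2*r), ge (u + z) with hQ
    have hmgu : Measurable fun z : EuclideanSpace ℝ (Fin n) => ge (u + z) := by fun_prop
    have hQle : ∀ y : EuclideanSpace ℝ (Fin n), y ∈ ball (0 : EuclideanSpace ℝ (Fin n)) r →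
        Q ≤ G (u + y) := by
      intro y hy
      have hGeq : G (u + y) = ∫⁻ z in ball y (3*r), ge (u + z) := by
        rw [← lint_ball_translate hmgu y (3*r)]
        exact lintegral_congr fun w => by rw [add_assoc]
      rw [hGeq, hQ]
      refine lintegral_mono_set fun z hz => ?_
      rw [mem_ball] at hz ⊢
      rw [mem_ball, dist_zero_right] at hy
      rw [dist_zero_right] at hz
      calc dist z y ≤ dist z 0 + dist 0 y := dist_triangle _ _ _
        _ < 2*r + r := by
            rw [dist_zero_right, dist_comm, dist_zero_right]
            exact add_lt_add hz hy
        _ = 3*r := by ring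
    calc ∫⁻ y in ball (0 : EuclideanSpace ℝ (Fin n)) r, ge (u + y + y) * (G (u + y))⁻¹
        ≤ ∫⁻ y in ball (0 : EuclideanSpace ℝ (Fin n)) r, ge (u + y + y) * Q⁻¹ := by
          refine lintegral_mono_ae ?_
          filter_upwards [ae_restrict_mem measurableSet_ball] with y hy
          exact mul_le_mul_right (ENNReal.inv_le_inv.mpr (hQle y hy)) _
      _ = (∫⁻ y in ball (0 : EuclideanSpace ℝ (Fin n)) r, ge (u + y + y)) * Q⁻¹ := by
          rw [lintegral_mul_const]
          fun_prop
      _ ≤ Q * Q⁻¹ := by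
          refine mul_le_mul_left ?_ _
          have h := lint_double (φ := fun z => ge (u + z)) hmgu r
          rw [hQ]
          refine le_trans (le_of_eq (lintegral_congr fun y => ?_)) h
          rw [add_assoc]
      _ ≤ 1 := ENNReal.mul_inv_le_one Q
  -- Step A
  have hA : (∫⁻ x, Bl x * (G x)⁻¹) ≤ ∫⁻ u, fe u := by
    calc ∫⁻ x, Bl x * (G x)⁻¹
        = ∫⁻ x, ∫⁻ y in ball (0 : EuclideanSpace ℝ (Fin n)) r,
            fe (x - y) * (ge (x + y) * (G x)⁻¹) := by
          refine lintegral_congr fun x => ?_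
          have hmy : Measurable fun y : EuclideanSpace ℝ (Fin n) => fe (x - y) * ge (x + y) := by
            fun_prop
          calc Bl x * (G x)⁻¹
              = ∫⁻ y in ball (0 : EuclideanSpace ℝ (Fin n)) r,
                  (fe (x - y) * ge (x + y)) * (G x)⁻¹ := (lintegral_mul_const _ hmy).symm
            _ = _ := lintegral_congr fun y => by rw [mul_assoc]
      _ = ∫⁻ y in ball (0 : EuclideanSpace ℝ (Fin n)) r, ∫⁻ x,
            fe (x - y) * (ge (x + y) * (G x)⁻¹) :=
          lintegral_lintegral_swap (by fun_prop)
      _ = ∫⁻ y in ball (0 : EuclideanSpace ℝ (Fin n)) r, ∫⁻ u,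
            fe u * (ge (u + y + y) * (G (u + y))⁻¹) := by
          refine lintegral_congr fun y => ?_
          have hmx : Measurable fun x : EuclideanSpace ℝ (Fin n) =>
              fe (x - y) * (ge (x + y) * (G x)⁻¹) := by fun_prop
          rw [← (measurePreserving_add_right volume y).lintegral_comp hmx]
          exact lintegral_congr fun u => by rw [add_sub_cancel_right]
      _ = ∫⁻ u, ∫⁻ y in ball (0 : EuclideanSpace ℝ (Fin n)) r,
            fe u * (ge (u + y + y) * (G (u + y))⁻¹) :=
          (lintegral_lintegral_swap (by fun_prop)).symm
      _ = ∫⁻ u, fe u * ∫⁻ y in ball (0 : EuclideanSpace ℝ (Fin n)) r,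
            ge (u + y + y) * (G (u + y))⁻¹ := by
          refine lintegral_congr fun u => ?_
          rw [lintegral_const_mul]
          fun_prop
      _ ≤ ∫⁻ u, fe u * 1 := lintegral_mono fun u => mul_le_mul_right (innerb u) _
      _ = ∫⁻ u, fe u := by simp
  -- Step B
  have hB : (∫⁻ x, G x) = volume (ball (0 : EuclideanSpace ℝ (Fin n)) (3*r)) * ∫⁻ u, ge u := by
    calc ∫⁻ x, G x
        = ∫⁻ y in ball (0 : EuclideanSpace ℝ (Fin n)) (3*r), ∫⁻ x, ge (x + y) :=
          lintegral_lintegral_swap (by fun_prop)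
      _ = ∫⁻ _y in ball (0 : EuclideanSpace ℝ (Fin n)) (3*r), ∫⁻ u, ge u := by
          refine lintegral_congr fun y => ?_
          exact (measurePreserving_add_right volume y).lintegral_comp hmge
      _ = volume (ball (0 : EuclideanSpace ℝ (Fin n)) (3*r)) * ∫⁻ u, ge u := by
          rw [setLIntegral_const, mul_comm]
  calc ∫⁻ x, ENNReal.ofReal
        (|∫ y in ball (0 : EuclideanSpace ℝ (Fin n)) r, f (x - y) * g (x + y)| ^ ((1:ℝ)/2))
      ≤ ∫⁻ x, (Bl x) ^ ((1:ℝ)/2) := lintegral_mono step1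
    _ ≤ (∫⁻ x, Bl x * (G x)⁻¹) ^ ((1:ℝ)/2) * (∫⁻ x, G x) ^ ((1:ℝ)/2) := hCS
    _ ≤ (∫⁻ u, fe u) ^ ((1:ℝ)/2) *
          ((volume (ball (0 : EuclideanSpace ℝ (Fin n)) (3*r))) * ∫⁻ u, ge u) ^ ((1:ℝ)/2) :=
        mul_le_mul' (ENNReal.rpow_le_rpow hA (by norm_num)) (le_of_eq (by rw [hB]))

end Stmt6Aux

theorem stmt_6 (n : ℕ) (hn : 0 < n) :
    ∃ C : ℝ, 0 < C ∧ ∀ (k : ℤ) (f g : EuclideanSpace ℝ (Fin n) → ℝ),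
      Integrable f volume → Integrable g volume →
      ∫⁻ x, ENNReal.ofReal
          (|∫ y in Metric.ball (0 : EuclideanSpace ℝ (Fin n)) ((2 : ℝ) ^ (-k)),
              f (x - y) * g (x + y)| ^ ((1 : ℝ) / 2))
        ≤ ENNReal.ofReal (C * ((2 : ℝ) ^ (-k) : ℝ) ^ ((n : ℝ) / 2) *
            (∫ y, |f y|) ^ ((1 : ℝ) / 2) * (∫ y, |g y|) ^ ((1 : ℝ) / 2)) := by
  haveI : Nonempty (Fin n) := Fin.pos_iff_nonempty.mp hn
  set V : ℝ := (volume (ball (0 : EuclideanSpace ℝ (Fin n)) 1)).toReal with hVdef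
  have hVpos : 0 < V :=
    ENNReal.toReal_pos (Metric.measure_ball_pos volume _ one_pos).ne' measure_ball_lt_top.ne
  refine ⟨((3:ℝ)^n * V) ^ ((1:ℝ)/2), by positivity, ?_⟩
  intro k f g hf hg
  set r : ℝ := (2:ℝ) ^ (-k) with hrdef
  have hr : 0 < r := by positivity
  -- measurable representatives
  set f' : EuclideanSpace ℝ (Fin n) → ℝ := hf.1.mk f with hf'def
  set g' : EuclideanSpace ℝ (Fin n) → ℝ := hg.1.mk g with hg'def
  have hmf' : Measurable f' := hf.1.stronglyMeasurable_mk.measurable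
  have hmg' : Measurable g' := hg.1.stronglyMeasurable_mk.measurable
  have hff' : f =ᵐ[volume] f' := hf.1.ae_eq_mk
  have hgg' : g =ᵐ[volume] g' := hg.1.ae_eq_mk
  have hf'i : Integrable f' volume := hf.congr hff'
  have hg'i : Integrable g' volume := hg.congr hgg'
  have hIf : ∫ y, |f y| = ∫ y, |f' y| :=
    integral_congr_ae (hff'.mono fun y hy => by simp only [hy])
  have hIg : ∫ y, |g y| = ∫ y, |g' y| :=
    integral_congr_ae (hgg'.mono fun y hy => by simp only [hy])
  have hIfnn : 0 ≤ ∫ y, |f' y| := integral_nonneg fun y => abs_nonneg _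
  have hIgnn : 0 ≤ ∫ y, |g' y| := integral_nonneg fun y => abs_nonneg _
  have hL : ∀ x : EuclideanSpace ℝ (Fin n),
      (∫ y in ball (0 : EuclideanSpace ℝ (Fin n)) r, f (x - y) * g (x + y))
      = ∫ y in ball (0 : EuclideanSpace ℝ (Fin n)) r, f' (x - y) * g' (x + y) := by
    intro x
    refine integral_congr_ae (ae_restrict_of_ae ?_)
    have h1 : (fun y : EuclideanSpace ℝ (Fin n) => f (x - y)) =ᵐ[volume]
        fun y => f' (x - y) :=
      (Measure.measurePreserving_sub_left volume x).quasiMeasurePreserving.ae_eq_comp hff'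
    have h2 : (fun y : EuclideanSpace ℝ (Fin n) => g (x + y)) =ᵐ[volume]
        fun y => g' (x + y) :=
      (measurePreserving_add_left volume x).quasiMeasurePreserving.ae_eq_comp hgg'
    filter_upwards [h1, h2] with y e1 e2
    show f (x - y) * g (x + y) = f' (x - y) * g' (x + y)
    rw [show f (x - y) = f' (x - y) from e1, show g (x + y) = g' (x + y) from e2]
  have hfi' : (∫⁻ u, ENNReal.ofReal |f' u|) = ENNReal.ofReal (∫ y, |f' y|) :=
    (ofReal_integral_eq_lintegral_ofReal hf'i.abs
      (Filter.Eventually.of_forall fun x => abs_nonneg _)).symm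
  have hgi' : (∫⁻ u, ENNReal.ofReal |g' u|) = ENNReal.ofReal (∫ y, |g' y|) :=
    (ofReal_integral_eq_lintegral_ofReal hg'i.abs
      (Filter.Eventually.of_forall fun x => abs_nonneg _)).symm
  have hvol : volume (ball (0 : EuclideanSpace ℝ (Fin n)) (3*r))
      = ENNReal.ofReal ((3*r)^n * V) := by
    rw [Measure.addHaar_ball volume 0 (by positivity : (0:ℝ) ≤ 3*r)]
    rw [show Module.finrank ℝ (EuclideanSpace ℝ (Fin n)) = n from finrank_euclideanSpace_fin]
    rw [ENNReal.ofReal_mul (by positivity), hVdef,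
      ENNReal.ofReal_toReal measure_ball_lt_top.ne]
  calc ∫⁻ x, ENNReal.ofReal
        (|∫ y in ball (0 : EuclideanSpace ℝ (Fin n)) r, f (x - y) * g (x + y)| ^ ((1:ℝ)/2))
      = ∫⁻ x, ENNReal.ofReal
          (|∫ y in ball (0 : EuclideanSpace ℝ (Fin n)) r, f' (x - y) * g' (x + y)| ^ ((1:ℝ)/2)) := by
        refine lintegral_congr fun x => ?_
        rw [hL x]
    _ ≤ (∫⁻ u, ENNReal.ofReal |f' u|) ^ ((1:ℝ)/2) *
          ((volume (ball (0 : EuclideanSpace ℝ (Fin n)) (3*r))) *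
            ∫⁻ u, ENNReal.ofReal |g' u|) ^ ((1:ℝ)/2) :=
        stmt6_key r hr f' g' hf'i hg'i hmf' hmg'
    _ = ENNReal.ofReal ((∫ y, |f' y|) ^ ((1:ℝ)/2) *
          ((3*r)^n * V * ∫ y, |g' y|) ^ ((1:ℝ)/2)) := by
        rw [hfi', hgi', hvol, ← ENNReal.ofReal_mul (by positivity),
          ENNReal.ofReal_rpow_of_nonneg hIfnn (by norm_num),
          ENNReal.ofReal_rpow_of_nonneg (by positivity) (by norm_num),
          ← ENNReal.ofReal_mul (by positivity)]
    _ ≤ ENNReal.ofReal (((3:ℝ)^n * V) ^ ((1:ℝ)/2) * r ^ ((n:ℝ)/2) *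
          (∫ y, |f y|) ^ ((1:ℝ)/2) * (∫ y, |g y|) ^ ((1:ℝ)/2)) := by
        refine ENNReal.ofReal_le_ofReal (le_of_eq ?_)
        rw [hIf, hIg]
        have hrn : (r^n : ℝ) ^ ((1:ℝ)/2) = r ^ ((n:ℝ)/2) := by
          rw [← Real.rpow_natCast r n, ← Real.rpow_mul hr.le]
          congr 1
          ring
        have e1 : ((3*r)^n * V * ∫ y, |g' y|) ^ ((1:ℝ)/2)
            = ((3:ℝ)^n * V) ^ ((1:ℝ)/2) * (r ^ ((n:ℝ)/2) * (∫ y, |g' y|) ^ ((1:ℝ)/2)) := by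
          rw [show ((3*r:ℝ)^n * V * ∫ y, |g' y|) = ((3:ℝ)^n * V) * (r^n * ∫ y, |g' y|) by ring]
          rw [Real.mul_rpow (by positivity) (by positivity),
            Real.mul_rpow (by positivity) hIgnn, hrn]
        rw [e1]
        ring
end

section
/- Let 0 < s < n with s/n < 1. For p, q ∈ (1, ∞) with 1/p + 1/q = s/n, choose β, γ > 0 with βp > 1, γq > 1, β + γ ≤ 1, and define f(y) = |y|^{−n/p} (log(e/|y|))^{−β} 𝟙_{0<|y|<1}(y) and g(y) = |y|^{−n/q} (log(e/|y|))^{−γ} 𝟙_{0<|y|<1}(y). Then f ∈ L^p(ℝⁿ), g ∈ L^q(ℝⁿ), but ∫_{|y|<1} |y|^{−n} (log(e/|y|))^{−(β+γ)} dy = ∞; consequently if G_s(y) ≥ c|y|^{s−n} on |y| < 1, then J_s(f,g)(0) = ∞. -/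
open MeasureTheory Set ENNReal

private lemma log_aux {r : ℝ} (h0 : 0 < r) :
    Real.log (Real.exp 1 / r) = 1 - Real.log r := by
  rw [Real.log_div (Real.exp_ne_zero 1) h0.ne', Real.log_exp]

private lemma log_aux_pos {r : ℝ} (h0 : 0 < r) (h1 : r < 1) :
    0 < Real.log (Real.exp 1 / r) := by
  rw [log_aux h0]
  have := Real.log_neg h0 h1
  linarith

/-- 1D change of variables for lintegrals. -/
private lemma lintegral_image_deriv {s : Set ℝ} {f f' : ℝ → ℝ}
    (hs : MeasurableSet s) (hf' : ∀ x ∈ s, HasDerivWithinAt f (f' x) s x)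
    (hf : InjOn f s) (g : ℝ → ℝ≥0∞) :
    ∫⁻ x in f '' s, g x = ∫⁻ x in s, ENNReal.ofReal |f' x| * g (f x) := by
  simpa only [ContinuousLinearMap.det_toSpanSingleton] using
    lintegral_image_eq_lintegral_abs_det_fderiv_mul volume hs
      (fun x hx => (hf' x hx).hasFDerivWithinAt) hf g

/-- The substitution `r = exp (1 - u)`. -/
private lemma key_subst (a : ℝ) :
    ∫⁻ r in Ioo (0:ℝ) 1, ENNReal.ofReal (r ^ (-1:ℝ) * Real.log (Real.exp 1 / r) ^ (-a)) =
    ∫⁻ u in Ioi (1:ℝ), ENNReal.ofReal (u ^ (-a)) := by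
  have himg : (fun u : ℝ => Real.exp (1 - u)) '' Ioi 1 = Ioo 0 1 := by
    ext r
    constructor
    · rintro ⟨u, hu, rfl⟩
      have hu1 : (1:ℝ) < u := hu
      exact ⟨Real.exp_pos _, Real.exp_lt_one_iff.2 (by linarith)⟩
    · rintro ⟨hr0, hr1⟩
      refine ⟨1 - Real.log r, ?_, by simp [Real.exp_log hr0]⟩
      have := Real.log_neg hr0 hr1
      simp only [mem_Ioi]
      linarith
  have hder : ∀ u ∈ Ioi (1:ℝ), HasDerivWithinAt (fun u => Real.exp (1 - u))
      (-Real.exp (1 - u)) (Ioi 1) u := by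
    intro u _
    have h1 : HasDerivAt (fun u : ℝ => 1 - u) (-1) u := by
      simpa using (hasDerivAt_id u).const_sub 1
    have := h1.exp
    simpa [mul_comm] using this.hasDerivWithinAt
  have hinj : InjOn (fun u : ℝ => Real.exp (1 - u)) (Ioi 1) := by
    intro u hu v hv h
    have := Real.exp_eq_exp.mp h
    linarith
  rw [← himg, lintegral_image_deriv measurableSet_Ioi hder hinj]
  refine setLIntegral_congr_fun measurableSet_Ioi ?_
  intro u hu
  beta_reduce
  have hu1 : (1:ℝ) < u := hu
  have hexp : (0:ℝ) < Real.exp (1 - u) := Real.exp_pos _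
  rw [abs_neg, abs_of_pos hexp, log_aux hexp, Real.log_exp,
    ← ENNReal.ofReal_mul hexp.le]
  congr 1
  have h1 : (1:ℝ) - (1 - u) = u := by ring
  rw [h1, Real.rpow_neg_one]
  rw [← Real.exp_neg]
  rw [← mul_assoc, ← Real.exp_add]
  have : (1 - u) + -(1 - u) = 0 := by ring
  rw [this, Real.exp_zero, one_mul]

private lemma key_fin {a : ℝ} (ha : 1 < a) :
    ∫⁻ u in Ioi (1:ℝ), ENNReal.ofReal (u ^ (-a)) < ⊤ := by
  have hint : IntegrableOn (fun u : ℝ => u ^ (-a)) (Ioi 1) :=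
    (integrableOn_Ioi_rpow_iff one_pos).2 (by linarith)
  have hnn : 0 ≤ᶠ[ae (volume.restrict (Ioi (1:ℝ)))] fun u : ℝ => u ^ (-a) := by
    filter_upwards [ae_restrict_mem measurableSet_Ioi] with u hu
    exact Real.rpow_nonneg (le_of_lt (lt_trans one_pos hu)) _
  exact (hasFiniteIntegral_iff_ofReal hnn).mp hint.2

private lemma key_inf {a : ℝ} (ha : a ≤ 1) :
    ∫⁻ u in Ioi (1:ℝ), ENNReal.ofReal (u ^ (-a)) = ⊤ := by
  by_contra h
  have hlt : ∫⁻ u in Ioi (1:ℝ), ENNReal.ofReal (u ^ (-a)) < ⊤ := lt_top_iff_ne_top.2 h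
  have hnn : 0 ≤ᶠ[ae (volume.restrict (Ioi (1:ℝ)))] fun u : ℝ => u ^ (-a) := by
    filter_upwards [ae_restrict_mem measurableSet_Ioi] with u hu
    exact Real.rpow_nonneg (le_of_lt (lt_trans one_pos hu)) _
  have hmeas : Measurable fun u : ℝ => u ^ (-a) := measurable_id.pow measurable_const
  have hint : IntegrableOn (fun u : ℝ => u ^ (-a)) (Ioi 1) :=
    ⟨hmeas.aestronglyMeasurable, (hasFiniteIntegral_iff_ofReal hnn).mpr hlt⟩
  have := (integrableOn_Ioi_rpow_iff one_pos).1 hint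
  linarith

/-- Polar-coordinates formula for lintegrals of radial functions. -/
private lemma lintegral_norm_radial {E : Type*} [NormedAddCommGroup E] [NormedSpace ℝ E]
    [MeasurableSpace E] [BorelSpace E] [FiniteDimensional ℝ E] [Nontrivial E]
    (μ : Measure E) [μ.IsAddHaarMeasure] (F : ℝ → ℝ≥0∞) (hF : Measurable F) :
    ∫⁻ x, F ‖x‖ ∂μ = μ.toSphere univ *
      ∫⁻ r in Ioi (0:ℝ), ENNReal.ofReal (r ^ (Module.finrank ℝ E - 1)) * F r := by
  have h2 := setLIntegral_subtype (measurableSet_singleton (0:E)).compl univ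
    (fun x => F ‖x‖) (μ := μ)
  rw [Measure.restrict_univ, image_univ, Subtype.range_coe] at h2
  have h3 := (μ.measurePreserving_homeomorphUnitSphereProd).lintegral_comp
    (f := fun p : Metric.sphere (0:E) 1 × Ioi (0:ℝ) => F p.2)
    (hF.comp (measurable_subtype_coe.comp measurable_snd))
  simp only [homeomorphUnitSphereProd_apply_snd_coe] at h3
  have h4 : ∫⁻ p : Metric.sphere (0:E) 1 × Ioi (0:ℝ), F p.2
      ∂(μ.toSphere.prod (Measure.volumeIoiPow (Module.finrank ℝ E - 1))) =
      μ.toSphere univ * ∫⁻ r : Ioi (0:ℝ), F r ∂(Measure.volumeIoiPow (Module.finrank ℝ E - 1)) := by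
    rw [lintegral_prod (fun p : Metric.sphere (0:E) 1 × Ioi (0:ℝ) => F p.2)
      ((hF.comp (measurable_subtype_coe.comp measurable_snd)).aemeasurable)]
    simp [lintegral_const, mul_comm]
  have h5 : ∫⁻ r : Ioi (0:ℝ), F r ∂(Measure.volumeIoiPow (Module.finrank ℝ E - 1)) =
      ∫⁻ r in Ioi (0:ℝ), ENNReal.ofReal (r ^ (Module.finrank ℝ E - 1)) * F r := by
    rw [Measure.volumeIoiPow, lintegral_withDensity_eq_lintegral_mul _
      ((measurable_subtype_coe.pow_const _).ennreal_ofReal)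
      (g := fun r : Ioi (0:ℝ) => F r) (hF.comp measurable_subtype_coe)]
    have h6 := setLIntegral_subtype (s := Ioi (0:ℝ)) measurableSet_Ioi univ
      (fun r : ℝ => ENNReal.ofReal (r ^ (Module.finrank ℝ E - 1)) * F r) (μ := volume)
    rw [Measure.restrict_univ, image_univ, Subtype.range_coe] at h6
    exact h6
  conv_lhs => rw [← MeasureTheory.restrict_compl_singleton (μ := μ) (0:E)]
  rw [← h2, h3, h4, h5]

/-- Reduction of the radial set integral over `Ioi 0` to the `u^{-c}` integral. -/
private lemma core_calc (n : ℕ) (hn : 0 < n) (c : ℝ) :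
    ∫⁻ r in Ioi (0:ℝ), ENNReal.ofReal (r ^ (n - 1)) *
      (if 0 < r ∧ r < 1 then
        ENNReal.ofReal (r ^ (-(n:ℝ)) * Real.log (Real.exp 1 / r) ^ (-c)) else 0)
    = ∫⁻ u in Ioi (1:ℝ), ENNReal.ofReal (u ^ (-c)) := by
  rw [← Ioo_union_Ici_eq_Ioi (zero_lt_one (α := ℝ)),
    lintegral_union measurableSet_Ici
      ((Iio_disjoint_Ici le_rfl).mono_left Ioo_subset_Iio_self)]
  have hIci : ∫⁻ r in Ici (1:ℝ), ENNReal.ofReal (r ^ (n - 1)) *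
      (if 0 < r ∧ r < 1 then
        ENNReal.ofReal (r ^ (-(n:ℝ)) * Real.log (Real.exp 1 / r) ^ (-c)) else 0) = 0 := by
    rw [setLIntegral_congr_fun measurableSet_Ici
      (fun r hr => ?_), lintegral_zero]
    have : ¬ (0 < r ∧ r < 1) := by
      rintro ⟨-, h1⟩; exact absurd hr (by simpa using h1)
    simp [this]
  rw [hIci, add_zero]
  rw [setLIntegral_congr_fun measurableSet_Ioo
    (fun r hr => ?_), key_subst c]
  have hr0 : (0:ℝ) < r := hr.1
  have hr1 : r < 1 := hr.2
  have hL : 0 < Real.log (Real.exp 1 / r) := log_aux_pos hr0 hr1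
  rw [if_pos (⟨hr0, hr1⟩ : 0 < r ∧ r < 1), ← ENNReal.ofReal_mul (by positivity)]
  congr 1
  rw [← mul_assoc, ← Real.rpow_natCast r (n - 1), ← Real.rpow_add hr0]
  congr 2
  have : ((n - 1 : ℕ) : ℝ) = (n : ℝ) - 1 := by
    push_cast [Nat.cast_sub hn]; ring
  rw [this]; ring

/-- Membership in Lp for the model function. -/
private lemma memLp_aux (n : ℕ) (hn : 0 < n) (p b : ℝ) (hp : 1 < p) (hbp : 1 < b * p) :
    MemLp (fun y : EuclideanSpace ℝ (Fin n) => if 0 < ‖y‖ ∧ ‖y‖ < 1 then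
      ‖y‖ ^ (-(n : ℝ) / p) * Real.log (Real.exp 1 / ‖y‖) ^ (-b) else 0)
      (ENNReal.ofReal p) volume := by
  haveI : Nonempty (Fin n) := Fin.pos_iff_nonempty.mp hn
  have hp0 : (0:ℝ) < p := by linarith
  set φ : ℝ → ℝ := fun r => if 0 < r ∧ r < 1 then
    r ^ (-(n : ℝ) / p) * Real.log (Real.exp 1 / r) ^ (-b) else 0 with hφ
  have hset : MeasurableSet {r : ℝ | 0 < r ∧ r < 1} := by
    have : {r : ℝ | 0 < r ∧ r < 1} = Ioo 0 1 := by ext r; simp [mem_Ioo]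
    rw [this]; exact measurableSet_Ioo
  have hφmeas : Measurable φ :=
    Measurable.ite hset
      ((measurable_id.pow measurable_const).mul
        ((Real.measurable_log.comp (measurable_const.div measurable_id)).pow measurable_const))
      measurable_const
  have hmeas : Measurable fun y : EuclideanSpace ℝ (Fin n) => φ ‖y‖ :=
    hφmeas.comp measurable_norm
  have hφnn : ∀ r, 0 ≤ φ r := by
    intro r
    simp only [hφ]
    split_ifs with h
    · exact mul_nonneg (Real.rpow_nonneg h.1.le _)
        (Real.rpow_nonneg (log_aux_pos h.1 h.2).le _)
    · exact le_refl 0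
  set F : ℝ → ℝ≥0∞ := fun r => (ENNReal.ofReal (φ r)) ^ p with hF
  have hFmeas : Measurable F := hφmeas.ennreal_ofReal.pow measurable_const
  have hFeq : ∀ r : ℝ, F r = if 0 < r ∧ r < 1 then
      ENNReal.ofReal (r ^ (-(n:ℝ)) * Real.log (Real.exp 1 / r) ^ (-(b*p))) else 0 := by
    intro r
    simp only [hF, hφ]
    split_ifs with h
    · obtain ⟨hr0, hr1⟩ := h
      have hL : 0 < Real.log (Real.exp 1 / r) := log_aux_pos hr0 hr1
      rw [ENNReal.ofReal_rpow_of_nonneg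
        (mul_nonneg (Real.rpow_nonneg hr0.le _) (Real.rpow_nonneg hL.le _)) hp0.le]
      congr 1
      rw [Real.mul_rpow (Real.rpow_nonneg hr0.le _) (Real.rpow_nonneg hL.le _),
        ← Real.rpow_mul hr0.le, ← Real.rpow_mul hL.le]
      congr 2
      · field_simp
      · ring
    · simp [ENNReal.zero_rpow_of_pos hp0]
  constructor
  · exact hmeas.aestronglyMeasurable
  · rw [eLpNorm_lt_top_iff_lintegral_rpow_enorm_lt_top
      (by simp [ENNReal.ofReal_eq_zero, not_le, hp0]) ofReal_ne_top]
    have heq : ∀ y : EuclideanSpace ℝ (Fin n),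
        ‖φ ‖y‖‖ₑ ^ (ENNReal.ofReal p).toReal = F ‖y‖ := by
      intro y
      rw [ENNReal.toReal_ofReal hp0.le, hF, Real.enorm_eq_ofReal (hφnn _)]
    calc ∫⁻ y : EuclideanSpace ℝ (Fin n), ‖φ ‖y‖‖ₑ ^ (ENNReal.ofReal p).toReal
        = ∫⁻ y : EuclideanSpace ℝ (Fin n), F ‖y‖ := by
          exact lintegral_congr fun y => heq y
      _ = (volume : Measure (EuclideanSpace ℝ (Fin n))).toSphere univ *
          ∫⁻ r in Ioi (0:ℝ),
            ENNReal.ofReal (r ^ (Module.finrank ℝ (EuclideanSpace ℝ (Fin n)) - 1)) * F r :=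
          lintegral_norm_radial _ _ hFmeas
      _ < ⊤ := by
          apply ENNReal.mul_lt_top
          · rw [Measure.toSphere_apply_univ]
            exact ENNReal.mul_lt_top (by simp) measure_ball_lt_top
          · rw [finrank_euclideanSpace, Fintype.card_fin]
            calc ∫⁻ r in Ioi (0:ℝ), ENNReal.ofReal (r ^ (n - 1)) * F r
                = ∫⁻ u in Ioi (1:ℝ), ENNReal.ofReal (u ^ (-(b*p))) := by
                  rw [← core_calc n hn (b*p)]
                  exact setLIntegral_congr_fun measurableSet_Ioi
                    (fun r _ => by rw [hFeq r])
              _ < ⊤ := key_fin hbp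

theorem stmt_11 (n : ℕ) (hn : 0 < n) (s : ℝ) (hs0 : 0 < s) (hsn : s < n)
    (p q β γ : ℝ) (hp : 1 < p) (hq : 1 < q) (hpq : 1 / p + 1 / q = s / n)
    (hβ : 0 < β) (hγ : 0 < γ) (hβp : 1 < β * p) (hγq : 1 < γ * q) (hβγ : β + γ ≤ 1)
    (f g : EuclideanSpace ℝ (Fin n) → ℝ)
    (hfdef : f = fun y => if 0 < ‖y‖ ∧ ‖y‖ < 1 then
        ‖y‖ ^ (-(n : ℝ) / p) * Real.log (Real.exp 1 / ‖y‖) ^ (-β) else 0)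
    (hgdef : g = fun y => if 0 < ‖y‖ ∧ ‖y‖ < 1 then
        ‖y‖ ^ (-(n : ℝ) / q) * Real.log (Real.exp 1 / ‖y‖) ^ (-γ) else 0)
    (G : EuclideanSpace ℝ (Fin n) → ℝ) (hGnn : ∀ y, 0 ≤ G y)
    (c : ℝ) (hc : 0 < c)
    (hGlow : ∀ y : EuclideanSpace ℝ (Fin n), 0 < ‖y‖ → ‖y‖ < 1 →
      c * ‖y‖ ^ (s - (n : ℝ)) ≤ G y) :
    MemLp f (ENNReal.ofReal p) volume ∧ MemLp g (ENNReal.ofReal q) volume ∧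
    (∫⁻ y in {y : EuclideanSpace ℝ (Fin n) | 0 < ‖y‖ ∧ ‖y‖ < 1},
        ENNReal.ofReal (‖y‖ ^ (-(n : ℝ)) * Real.log (Real.exp 1 / ‖y‖) ^ (-(β + γ)))) = ⊤ ∧
    (∫⁻ y, ENNReal.ofReal (G y * f (-y) * g y)) = ⊤ := by
  haveI : Nonempty (Fin n) := Fin.pos_iff_nonempty.mp hn
  have hn0 : (n:ℝ) ≠ 0 := Nat.cast_ne_zero.2 hn.ne'
  have hs' : (n:ℝ)/p + (n:ℝ)/q = s := by
    have := hpq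
    field_simp at this ⊢
    nlinarith [this]
  -- The divergent radial integral
  set S : Set (EuclideanSpace ℝ (Fin n)) := {y | 0 < ‖y‖ ∧ ‖y‖ < 1} with hS
  have hSmeas : MeasurableSet S := by
    have : S = (fun y : EuclideanSpace ℝ (Fin n) => ‖y‖) ⁻¹' (Ioo 0 1) := by
      ext y; simp [hS, mem_Ioo]
    rw [this]
    exact measurable_norm measurableSet_Ioo
  set F : ℝ → ℝ≥0∞ := fun r => if 0 < r ∧ r < 1 then
    ENNReal.ofReal (r ^ (-(n:ℝ)) * Real.log (Real.exp 1 / r) ^ (-(β + γ))) else 0 with hF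
  have hFmeas : Measurable F := by
    refine Measurable.ite ?_ ?_ measurable_const
    · have : {r : ℝ | 0 < r ∧ r < 1} = Ioo 0 1 := by ext r; simp [mem_Ioo]
      rw [this]; exact measurableSet_Ioo
    · exact ((measurable_id.pow measurable_const).mul
        ((Real.measurable_log.comp (measurable_const.div measurable_id)).pow
          measurable_const)).ennreal_ofReal
  have hthird : (∫⁻ y in S,
      ENNReal.ofReal (‖y‖ ^ (-(n : ℝ)) * Real.log (Real.exp 1 / ‖y‖) ^ (-(β + γ)))) = ⊤ := by
    have hind : ∀ y : EuclideanSpace ℝ (Fin n),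
        S.indicator (fun y => ENNReal.ofReal
          (‖y‖ ^ (-(n : ℝ)) * Real.log (Real.exp 1 / ‖y‖) ^ (-(β + γ)))) y = F ‖y‖ := by
      intro y
      by_cases h : y ∈ S
      · rw [indicator_of_mem h]
        simp only [hS, mem_setOf_eq] at h
        exact (if_pos h).symm
      · rw [indicator_of_notMem h]
        simp only [hS, mem_setOf_eq] at h
        exact (if_neg h).symm
    rw [← lintegral_indicator hSmeas]
    calc ∫⁻ y, S.indicator (fun y => ENNReal.ofReal
          (‖y‖ ^ (-(n : ℝ)) * Real.log (Real.exp 1 / ‖y‖) ^ (-(β + γ)))) y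
        = ∫⁻ y : EuclideanSpace ℝ (Fin n), F ‖y‖ := lintegral_congr hind
      _ = (volume : Measure (EuclideanSpace ℝ (Fin n))).toSphere univ *
          ∫⁻ r in Ioi (0:ℝ),
            ENNReal.ofReal (r ^ (Module.finrank ℝ (EuclideanSpace ℝ (Fin n)) - 1)) * F r :=
          lintegral_norm_radial _ _ hFmeas
      _ = ⊤ := by
          have hK : (volume : Measure (EuclideanSpace ℝ (Fin n))).toSphere univ ≠ 0 := by
            rw [Measure.toSphere_apply_univ]
            refine mul_ne_zero ?_ ?_
            · simp [finrank_euclideanSpace, hn.ne']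
            · exact (Metric.measure_ball_pos _ _ one_pos).ne'
          have hint : ∫⁻ r in Ioi (0:ℝ),
              ENNReal.ofReal (r ^ (Module.finrank ℝ (EuclideanSpace ℝ (Fin n)) - 1)) * F r = ⊤ := by
            rw [finrank_euclideanSpace, Fintype.card_fin]
            rw [show (∫⁻ r in Ioi (0:ℝ), ENNReal.ofReal (r ^ (n - 1)) * F r) =
              ∫⁻ u in Ioi (1:ℝ), ENNReal.ofReal (u ^ (-(β + γ))) from core_calc n hn (β + γ)]
            exact key_inf hβγ
          rw [hint, ENNReal.mul_top hK]
  refine ⟨?_, ?_, hthird, ?_⟩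
  · rw [hfdef]; exact memLp_aux n hn p β hp hβp
  · rw [hgdef]; exact memLp_aux n hn q γ hq hγq
  · -- the bilinear integral diverges
    rw [eq_top_iff]
    calc (⊤ : ℝ≥0∞) = ENNReal.ofReal c * ∫⁻ y in S,
          ENNReal.ofReal (‖y‖ ^ (-(n : ℝ)) * Real.log (Real.exp 1 / ‖y‖) ^ (-(β + γ))) := by
          rw [hthird, ENNReal.mul_top (ENNReal.ofReal_pos.2 hc).ne']
      _ = ∫⁻ y in S, ENNReal.ofReal c *
          ENNReal.ofReal (‖y‖ ^ (-(n : ℝ)) * Real.log (Real.exp 1 / ‖y‖) ^ (-(β + γ))) := by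
          rw [lintegral_const_mul'' _ ?_]
          exact (((measurable_norm.pow measurable_const).mul
            ((Real.measurable_log.comp
              (measurable_const.div measurable_norm)).pow measurable_const)).ennreal_ofReal).aemeasurable
      _ ≤ ∫⁻ y in S, ENNReal.ofReal (G y * f (-y) * g y) := by
          refine setLIntegral_mono' hSmeas fun y hy => ?_
          obtain ⟨hy0, hy1⟩ : 0 < ‖y‖ ∧ ‖y‖ < 1 := hy
          have hL : 0 < Real.log (Real.exp 1 / ‖y‖) := log_aux_pos hy0 hy1
          rw [← ENNReal.ofReal_mul hc.le]
          refine ENNReal.ofReal_le_ofReal ?_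
          have hfy : f (-y) = ‖y‖ ^ (-(n:ℝ)/p) * Real.log (Real.exp 1 / ‖y‖) ^ (-β) := by
            rw [hfdef]
            simp only [norm_neg]
            rw [if_pos (⟨hy0, hy1⟩ : 0 < ‖y‖ ∧ ‖y‖ < 1)]
          have hgy : g y = ‖y‖ ^ (-(n:ℝ)/q) * Real.log (Real.exp 1 / ‖y‖) ^ (-γ) := by
            rw [hgdef]
            simp only []
            rw [if_pos (⟨hy0, hy1⟩ : 0 < ‖y‖ ∧ ‖y‖ < 1)]
          have hprod : ‖y‖ ^ (s - (n:ℝ)) * (f (-y) * g y) =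
              ‖y‖ ^ (-(n : ℝ)) * Real.log (Real.exp 1 / ‖y‖) ^ (-(β + γ)) := by
            rw [hfy, hgy]
            rw [show ‖y‖ ^ (s - (n:ℝ)) * (‖y‖ ^ (-(n:ℝ)/p) * Real.log (Real.exp 1 / ‖y‖) ^ (-β) *
                (‖y‖ ^ (-(n:ℝ)/q) * Real.log (Real.exp 1 / ‖y‖) ^ (-γ))) =
                (‖y‖ ^ (s - (n:ℝ)) * ‖y‖ ^ (-(n:ℝ)/p) * ‖y‖ ^ (-(n:ℝ)/q)) *
                (Real.log (Real.exp 1 / ‖y‖) ^ (-β) * Real.log (Real.exp 1 / ‖y‖) ^ (-γ)) by ring]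
            rw [← Real.rpow_add hy0, ← Real.rpow_add hy0, ← Real.rpow_add hL]
            congr 1
            · congr 1
              have : s - (n:ℝ) + -(n:ℝ)/p + -(n:ℝ)/q = -(n:ℝ) + (s - ((n:ℝ)/p + (n:ℝ)/q)) := by
                ring
              rw [this, hs']
              ring
            · congr 1
              ring
          have hfg_nn : 0 ≤ f (-y) * g y := by
            rw [hfy, hgy]
            positivity
          calc c * (‖y‖ ^ (-(n : ℝ)) * Real.log (Real.exp 1 / ‖y‖) ^ (-(β + γ)))
              = (c * ‖y‖ ^ (s - (n:ℝ))) * (f (-y) * g y) := by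
                rw [mul_assoc, hprod]
            _ ≤ G y * (f (-y) * g y) :=
                mul_le_mul_of_nonneg_right (hGlow y hy0 hy1) hfg_nn
            _ = G y * f (-y) * g y := by ring
      _ ≤ ∫⁻ y, ENNReal.ofReal (G y * f (-y) * g y) :=
          setLIntegral_le_lintegral _ _
end

section
/- Let 0 < s < n, 1 < p, q < ∞ with 1/p + 1/q > s/n, and 1/r = 1/p + 1/q − s/n. Suppose G_s(y) ≥ c|y|^{s−n} for |y| ≤ 1. For any α with 1/α > 1/p + 1/q, choose β < p, γ < q with 1/β + 1/γ = 1/α, and set f(y) = |y|^{−n/p}(log(e/|y|))^{−1/β}𝟙_{0<|y|<1}, g(y) = |y|^{−n/q}(log(e/|y|))^{−1/γ}𝟙_{0<|y|<1}. Then for all x with 0 < |x| < 1/8, J_s(f,g)(x) ≥ c' |x|^{−n/r} (log(e/|x|))^{−1/α}. -/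
set_option maxHeartbeats 1000000


open MeasureTheory Set ENNReal

private lemma fbound_aux (n : ℕ) (p β t z : ℝ) (ht : 0 < t) (ht8 : t < 1/8)
    (hz1 : t/2 ≤ z) (hz2 : z ≤ 3*t/2) (hβ : 0 < β) (hp : 0 < p) :
    (3*t/2) ^ (-(n:ℝ)/p) * ((1+Real.log 2) * Real.log (Real.exp 1 / t)) ^ (-(1/β))
      ≤ z ^ (-(n:ℝ)/p) * Real.log (Real.exp 1 / z) ^ (-(1/β)) := by
  have hz0 : 0 < z := lt_of_lt_of_le (by linarith) hz1
  have hlt : Real.log t < 0 := Real.log_neg ht (by linarith)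
  have hL : Real.log (Real.exp 1 / t) = 1 - Real.log t := by
    rw [Real.log_div (Real.exp_ne_zero 1) ht.ne', Real.log_exp]
  have hLz : Real.log (Real.exp 1 / z) = 1 - Real.log z := by
    rw [Real.log_div (Real.exp_ne_zero 1) hz0.ne', Real.log_exp]
  have h2 : (0:ℝ) < Real.log 2 := Real.log_pos (by norm_num)
  have hzlog : Real.log (t/2) ≤ Real.log z := Real.log_le_log (by linarith) hz1
  have hlog2 : Real.log (t/2) = Real.log t - Real.log 2 := by
    rw [Real.log_div ht.ne' (by norm_num)]
  have hzneg : Real.log z ≤ 0 := Real.log_nonpos hz0.le (by linarith)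
  have hpos : 0 < Real.log (Real.exp 1 / z) := by rw [hLz]; linarith
  have part1 : (3*t/2) ^ (-(n:ℝ)/p) ≤ z ^ (-(n:ℝ)/p) := by
    apply Real.rpow_le_rpow_of_nonpos hz0 hz2
    rw [neg_div]
    exact neg_nonpos.mpr (by positivity)
  have part2 : ((1+Real.log 2) * Real.log (Real.exp 1 / t)) ^ (-(1/β))
      ≤ Real.log (Real.exp 1 / z) ^ (-(1/β)) := by
    apply Real.rpow_le_rpow_of_nonpos hpos ?_ (neg_nonpos.mpr (by positivity))
    rw [hLz, hL]; nlinarith [mul_pos h2 (neg_pos.mpr hlt)]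
  have hm : (0:ℝ) ≤ ((1+Real.log 2) * Real.log (Real.exp 1 / t)) ^ (-(1/β)) := by
    apply Real.rpow_nonneg; nlinarith
  exact mul_le_mul part1 part2 hm (Real.rpow_nonneg hz0.le _)

theorem stmt_14 (n : ℕ) (hn : 0 < n) (s : ℝ) (hs0 : 0 < s) (hsn : s < n)
    (p q r α β γ : ℝ) (hp : 1 < p) (hq : 1 < q)
    (hpq : s / n < 1 / p + 1 / q) (hr : 1 / r = 1 / p + 1 / q - s / n)
    (hα0 : 0 < α) (hα : 1 / p + 1 / q < 1 / α)
    (hβ0 : 0 < β) (hβ : β < p) (hγ0 : 0 < γ) (hγ : γ < q)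
    (hβγ : 1 / β + 1 / γ = 1 / α)
    (f g : EuclideanSpace ℝ (Fin n) → ℝ)
    (hfdef : f = fun y => if 0 < ‖y‖ ∧ ‖y‖ < 1 then
        ‖y‖ ^ (-(n : ℝ) / p) * Real.log (Real.exp 1 / ‖y‖) ^ (-(1 / β)) else 0)
    (hgdef : g = fun y => if 0 < ‖y‖ ∧ ‖y‖ < 1 then
        ‖y‖ ^ (-(n : ℝ) / q) * Real.log (Real.exp 1 / ‖y‖) ^ (-(1 / γ)) else 0)
    (G : EuclideanSpace ℝ (Fin n) → ℝ) (hGnn : ∀ y, 0 ≤ G y)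
    (c : ℝ) (hc : 0 < c)
    (hGlow : ∀ y : EuclideanSpace ℝ (Fin n), 0 < ‖y‖ → ‖y‖ ≤ 1 →
      c * ‖y‖ ^ (s - (n : ℝ)) ≤ G y) :
    ∃ c' : ℝ, 0 < c' ∧ ∀ x : EuclideanSpace ℝ (Fin n), 0 < ‖x‖ → ‖x‖ < 1 / 8 →
      ENNReal.ofReal
          (c' * ‖x‖ ^ (-(n : ℝ) / r) * Real.log (Real.exp 1 / ‖x‖) ^ (-(1 / α)))
        ≤ ∫⁻ y, ENNReal.ofReal (G y * f (x - y) * g (x + y)) := by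
  haveI : NeZero n := ⟨hn.ne'⟩
  haveI : Nontrivial (EuclideanSpace ℝ (Fin n)) := inferInstance
  have hn0 : ((n:ℝ)) ≠ 0 := Nat.cast_ne_zero.mpr hn.ne'
  have hnpos : (0:ℝ) < n := Nat.cast_pos.mpr hn
  have hp0 : (0:ℝ) < p := lt_trans one_pos hp
  have hq0 : (0:ℝ) < q := lt_trans one_pos hq
  have h2 : (0:ℝ) < Real.log 2 := Real.log_pos (by norm_num)
  set v : ℝ≥0∞ := volume (Metric.ball (0:EuclideanSpace ℝ (Fin n)) 1) with hv
  have hv0 : 0 < v := Metric.measure_ball_pos _ _ one_pos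
  have hvt : v ≠ ⊤ := measure_ball_lt_top.ne
  have hvr : 0 < v.toReal := ENNReal.toReal_pos hv0.ne' hvt
  refine ⟨c * v.toReal * 2^((n:ℝ)-s) * (2/3:ℝ)^((n:ℝ)/p) * (2/3:ℝ)^((n:ℝ)/q)
    * (2:ℝ)^(-(n:ℝ)) * (1+Real.log 2)^(-(1/α)), by positivity, ?_⟩
  intro x hx0 hx8
  set t := ‖x‖ with htdef
  set L := Real.log (Real.exp 1 / t) with hLdef
  have hLpos : 0 < L := by
    rw [hLdef, Real.log_div (Real.exp_ne_zero 1) hx0.ne', Real.log_exp]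
    have := Real.log_neg hx0 (by linarith)
    linarith
  have hl2 : (0:ℝ) < 1 + Real.log 2 := by linarith
  set m : ℝ := c * ((t/2)^(s-(n:ℝ)))
      * ((3*t/2)^(-(n:ℝ)/p) * ((1+Real.log 2) * L)^(-(1/β)))
      * ((3*t/2)^(-(n:ℝ)/q) * ((1+Real.log 2) * L)^(-(1/γ))) with hmdef
  have hm0 : 0 ≤ m := by positivity
  -- measure of singleton zero
  have hsing : volume ({0} : Set (EuclideanSpace ℝ (Fin n))) = 0 := by
    rw [← Metric.closedBall_zero, Measure.addHaar_closedBall _ _ le_rfl,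
      finrank_euclideanSpace_fin]
    simp [zero_pow hn.ne']
  have h0 : ∀ᵐ y : EuclideanSpace ℝ (Fin n), y ≠ 0 := by
    rw [ae_iff]
    have : {y : EuclideanSpace ℝ (Fin n) | ¬ y ≠ 0} = {0} := by ext y; simp
    rw [this]; exact hsing
  -- pointwise bound
  have hpoint : ∀ y : EuclideanSpace ℝ (Fin n), y ≠ 0 →
      (Metric.ball (0:EuclideanSpace ℝ (Fin n)) (t/2)).indicator (fun _ => ENNReal.ofReal m) y
        ≤ ENNReal.ofReal (G y * f (x - y) * g (x + y)) := by
    intro y hy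
    by_cases hyb : y ∈ Metric.ball (0:EuclideanSpace ℝ (Fin n)) (t/2)
    · rw [Set.indicator_of_mem hyb]
      apply ENNReal.ofReal_le_ofReal
      have hyn : 0 < ‖y‖ := norm_pos_iff.mpr hy
      have hylt : ‖y‖ < t/2 := by simpa [dist_zero_right] using hyb
      -- norms of x ∓ y
      have hxy1 : t/2 ≤ ‖x - y‖ := by
        have := norm_sub_norm_le x y; linarith
      have hxy2 : ‖x - y‖ ≤ 3*t/2 := by
        have := norm_sub_le x y; linarith
      have hxy0 : 0 < ‖x - y‖ := by linarith
      have hxy1' : t/2 ≤ ‖x + y‖ := by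
        have h := norm_sub_le (x+y) y
        have : x = (x + y) - y := by abel
        rw [← this] at h; linarith
      have hxy2' : ‖x + y‖ ≤ 3*t/2 := by
        have := norm_add_le x y; linarith
      have hxy0' : 0 < ‖x + y‖ := by linarith
      have hxylt1 : ‖x - y‖ < 1 := by linarith
      have hxylt1' : ‖x + y‖ < 1 := by linarith
      -- lower bounds for each factor
      have hGy : c * (t/2)^(s-(n:ℝ)) ≤ G y := by
        refine le_trans ?_ (hGlow y hyn (by linarith))
        have : ‖y‖ ^ (s-(n:ℝ)) ≥ (t/2) ^ (s-(n:ℝ)) :=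
          Real.rpow_le_rpow_of_nonpos hyn hylt.le (by linarith)
        nlinarith
      have hfy : (3*t/2)^(-(n:ℝ)/p) * ((1+Real.log 2) * L)^(-(1/β)) ≤ f (x - y) := by
        simp only [hfdef]
        rw [if_pos (show 0 < ‖x-y‖ ∧ ‖x-y‖ < 1 from ⟨hxy0, hxylt1⟩)]
        exact fbound_aux n p β t ‖x-y‖ hx0 hx8 hxy1 hxy2 hβ0 hp0
      have hgy : (3*t/2)^(-(n:ℝ)/q) * ((1+Real.log 2) * L)^(-(1/γ)) ≤ g (x + y) := by
        simp only [hgdef]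
        rw [if_pos (show 0 < ‖x+y‖ ∧ ‖x+y‖ < 1 from ⟨hxy0', hxylt1'⟩)]
        exact fbound_aux n q γ t ‖x+y‖ hx0 hx8 hxy1' hxy2' hγ0 hq0
      have hb1 : (0:ℝ) ≤ (3*t/2)^(-(n:ℝ)/p) * ((1+Real.log 2) * L)^(-(1/β)) := by
        positivity
      have hb2 : (0:ℝ) ≤ (3*t/2)^(-(n:ℝ)/q) * ((1+Real.log 2) * L)^(-(1/γ)) := by
        positivity
      have hGc : (0:ℝ) ≤ c * (t/2)^(s-(n:ℝ)) := by positivity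
      have hf0 : (0:ℝ) ≤ f (x - y) := le_trans hb1 hfy
      calc m ≤ (G y * f (x-y)) *
            ((3*t/2)^(-(n:ℝ)/q) * ((1+Real.log 2) * L)^(-(1/γ))) := by
            rw [hmdef]
            exact mul_le_mul (mul_le_mul hGy hfy hb1 (hGnn y)) le_rfl hb2
              (mul_nonneg (hGnn y) hf0)
        _ ≤ G y * f (x-y) * g (x+y) :=
            mul_le_mul le_rfl hgy hb2 (mul_nonneg (hGnn y) hf0)
    · rw [Set.indicator_of_notMem hyb]; exact zero_le
  -- main chain
  have hball : volume (Metric.ball (0:EuclideanSpace ℝ (Fin n)) (t/2)) = ENNReal.ofReal ((t/2)^n) * v := by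
    rw [Measure.addHaar_ball _ _ (by positivity : (0:ℝ) ≤ t/2), finrank_euclideanSpace_fin]
  -- real equality
  have hreal : c * v.toReal * 2^((n:ℝ)-s) * (2/3:ℝ)^((n:ℝ)/p) * (2/3:ℝ)^((n:ℝ)/q)
      * (2:ℝ)^(-(n:ℝ)) * (1+Real.log 2)^(-(1/α)) * t ^ (-(n:ℝ)/r) * L ^ (-(1/α))
      = m * ((t/2)^n * v.toReal) := by
    have hrkey : -((n:ℝ))/r = (s-(n:ℝ)) + (-(n:ℝ)/p) + (-(n:ℝ)/q) + (n:ℝ) := by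
      rw [div_eq_mul_one_div (-(n:ℝ)) r, hr]
      field_simp
      ring
    have hA : t ^ (-(n:ℝ)/r)
        = t^(s-(n:ℝ)) * t^(-(n:ℝ)/p) * t^(-(n:ℝ)/q) * t^((n:ℝ)) := by
      rw [← Real.rpow_add hx0, ← Real.rpow_add hx0, ← Real.rpow_add hx0, hrkey]
    have hB : L ^ (-(1/α)) = L^(-(1/β)) * L^(-(1/γ)) := by
      rw [← Real.rpow_add hLpos]; congr 1
      rw [← hβγ]; ring
    have hC : (1+Real.log 2) ^ (-(1/α))
        = (1+Real.log 2)^(-(1/β)) * (1+Real.log 2)^(-(1/γ)) := by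
      rw [← Real.rpow_add hl2]; congr 1
      rw [← hβγ]; ring
    have hD1 : ((1+Real.log 2) * L)^(-(1/β))
        = (1+Real.log 2)^(-(1/β)) * L^(-(1/β)) := Real.mul_rpow hl2.le hLpos.le
    have hD2 : ((1+Real.log 2) * L)^(-(1/γ))
        = (1+Real.log 2)^(-(1/γ)) * L^(-(1/γ)) := Real.mul_rpow hl2.le hLpos.le
    have he1 : (t/2)^(s-(n:ℝ)) = t^(s-(n:ℝ)) * 2^((n:ℝ)-s) := by
      rw [div_eq_mul_inv, Real.mul_rpow hx0.le (by norm_num),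
        Real.inv_rpow (by norm_num : (0:ℝ) ≤ 2), ← Real.rpow_neg (by norm_num : (0:ℝ) ≤ 2),
        neg_sub]
    have he2 : (3*t/2)^(-(n:ℝ)/p) = t^(-(n:ℝ)/p) * (2/3:ℝ)^((n:ℝ)/p) := by
      have h32 : (3:ℝ)*t/2 = t * (3/2) := by ring
      rw [h32, Real.mul_rpow hx0.le (by norm_num), neg_div,
        Real.rpow_neg (by norm_num : (0:ℝ) ≤ 3/2), ← Real.inv_rpow (by norm_num : (0:ℝ) ≤ 3/2)]
      norm_num
    have he3 : (3*t/2)^(-(n:ℝ)/q) = t^(-(n:ℝ)/q) * (2/3:ℝ)^((n:ℝ)/q) := by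
      have h32 : (3:ℝ)*t/2 = t * (3/2) := by ring
      rw [h32, Real.mul_rpow hx0.le (by norm_num), neg_div,
        Real.rpow_neg (by norm_num : (0:ℝ) ≤ 3/2), ← Real.inv_rpow (by norm_num : (0:ℝ) ≤ 3/2)]
      norm_num
    have he4 : ((t/2:ℝ))^(n:ℕ) = t^((n:ℝ)) * (2:ℝ)^(-(n:ℝ)) := by
      rw [← Real.rpow_natCast (t/2) n, div_eq_mul_inv,
        Real.mul_rpow hx0.le (by norm_num),
        Real.inv_rpow (by norm_num : (0:ℝ) ≤ 2), ← Real.rpow_neg (by norm_num : (0:ℝ) ≤ 2)]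
    rw [hmdef, hA, hB, hC, hD1, hD2, he1, he2, he3, he4]
    ring
  calc ENNReal.ofReal (c * v.toReal * 2^((n:ℝ)-s) * (2/3:ℝ)^((n:ℝ)/p) * (2/3:ℝ)^((n:ℝ)/q)
        * (2:ℝ)^(-(n:ℝ)) * (1+Real.log 2)^(-(1/α)) * t ^ (-(n:ℝ)/r) * L ^ (-(1/α)))
      = ENNReal.ofReal (m * ((t/2)^n * v.toReal)) := by rw [hreal]
    _ = ENNReal.ofReal m * (ENNReal.ofReal ((t/2)^n) * v) := by
        rw [ENNReal.ofReal_mul hm0, ENNReal.ofReal_mul (by positivity : (0:ℝ) ≤ (t/2)^n),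
          ENNReal.ofReal_toReal hvt]
    _ = ENNReal.ofReal m * volume (Metric.ball (0:EuclideanSpace ℝ (Fin n)) (t/2)) := by rw [hball]
    _ = ∫⁻ y in Metric.ball (0:EuclideanSpace ℝ (Fin n)) (t/2), ENNReal.ofReal m := (setLIntegral_const _ _).symm
    _ = ∫⁻ y, (Metric.ball (0:EuclideanSpace ℝ (Fin n)) (t/2)).indicator (fun _ => ENNReal.ofReal m) y := by
        rw [lintegral_indicator measurableSet_ball]
    _ ≤ ∫⁻ y, ENNReal.ofReal (G y * f (x - y) * g (x + y)) :=
        lintegral_mono_ae (h0.mono fun y hy => hpoint y hy)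
end

section
/- Let 0 < s < n and suppose G_s ≥ 0 satisfies G_s(y) ≥ c|y|^{s−n} for |y| ≤ 1. Then there is no 0 < α < ∞ and constant C such that ‖J_s(f,g)‖_{L^{n/(n−s),α}} ≤ C ‖f‖_{L¹} ‖g‖_{L^∞} for all f ∈ L¹(ℝⁿ), g ∈ L^∞(ℝⁿ). In other words, J_s : L¹ × L^∞ → L^{n/(n−s),α} is unbounded for every finite α. -/
open MeasureTheory Set ENNReal

/-- Decreasing rearrangement of `h` with respect to `μ`. -/
noncomputable def rearrangement {X : Type*} [MeasurableSpace X] (μ : Measure X)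
    (h : X → ℝ) (t : ℝ≥0∞) : ℝ≥0∞ :=
  sInf {l : ℝ≥0∞ | μ {x | l < ENNReal.ofReal |h x|} ≤ t}

/-- Lorentz quasi-norm `‖h‖_{L^{p,α}}` defined via the decreasing rearrangement. -/
noncomputable def lorentzNorm {X : Type*} [MeasurableSpace X] (μ : Measure X)
    (h : X → ℝ) (p : ℝ) (α : ℝ≥0∞) : ℝ≥0∞ :=
  if α = ⊤ then
    ⨆ t ∈ Ioi (0 : ℝ), ENNReal.ofReal t ^ (1 / p) * rearrangement μ h (ENNReal.ofReal t)
  else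
    (∫⁻ t in Ioi (0 : ℝ),
        (ENNReal.ofReal t ^ (1 / p) * rearrangement μ h (ENNReal.ofReal t)) ^ α.toReal *
          ENNReal.ofReal t⁻¹) ^ (1 / α.toReal)

set_option maxHeartbeats 2000000

theorem stmt_17 (n : ℕ) (hn : 0 < n) (s : ℝ) (hs0 : 0 < s) (hsn : s < n)
    (G : EuclideanSpace ℝ (Fin n) → ℝ) (hGmeas : Measurable G) (hGnn : ∀ y, 0 ≤ G y)
    (hGint : Integrable G volume)
    (c : ℝ) (hc : 0 < c)
    (hGlow : ∀ y : EuclideanSpace ℝ (Fin n), 0 < ‖y‖ → ‖y‖ ≤ 1 →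
      c * ‖y‖ ^ (s - (n : ℝ)) ≤ G y) :
    ¬ ∃ (α C : ℝ), 0 < α ∧ 0 < C ∧
      ∀ f g : EuclideanSpace ℝ (Fin n) → ℝ,
        Integrable f volume → MemLp g ⊤ volume →
        lorentzNorm volume (fun x => ∫ y, G y * f (x - y) * g (x + y))
            ((n : ℝ) / ((n : ℝ) - s)) (ENNReal.ofReal α)
          ≤ ENNReal.ofReal C * eLpNorm f 1 volume * eLpNorm g ⊤ volume := by
  rintro ⟨α, C, hα, hC, hbound⟩
  haveI : Nonempty (Fin n) := Fin.pos_iff_nonempty.mp hn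
  haveI : Nontrivial (EuclideanSpace ℝ (Fin n)) := inferInstance
  have hns : (0:ℝ) < (n:ℝ) - s := by linarith
  have hn0 : (0:ℝ) < (n:ℝ) := by exact_mod_cast hn
  set ω := volume (Metric.ball (0 : EuclideanSpace ℝ (Fin n)) 1) with hωdef
  have hω0 : 0 < ω := Metric.measure_ball_pos _ _ one_pos
  have hωtop : ω ≠ ⊤ := measure_ball_lt_top.ne
  set w := ω.toReal with hwdef
  have hw0 : 0 < w := ENNReal.toReal_pos hω0.ne' hωtop
  have hωw : ω = ENNReal.ofReal w := (ENNReal.ofReal_toReal hωtop).symm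
  set c₁ := c * 2 ^ (s - (n:ℝ)) with hc₁def
  have hc₁0 : 0 < c₁ := mul_pos hc (Real.rpow_pos_of_pos two_pos _)
  set c₂ := c₁ * (2 / w) ^ ((s - (n:ℝ))/(n:ℝ)) with hc₂def
  have hc₂0 : 0 < c₂ := mul_pos hc₁0 (Real.rpow_pos_of_pos (by positivity) _)
  set M := (C / c₂) ^ α with hMdef
  have hM0 : 0 < M := Real.rpow_pos_of_pos (by positivity) _
  set ε := (1/4 : ℝ) * Real.exp (-(M+1)) with hεdef
  have hε0 : 0 < ε := by positivity
  have hball : ∀ (x : EuclideanSpace ℝ (Fin n)) (r : ℝ), 0 ≤ r →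
      volume (Metric.ball x r) = ENNReal.ofReal (r ^ n) * ω := by
    intro x r hr
    rw [hωdef, Measure.addHaar_ball _ _ hr, finrank_euclideanSpace_fin]
  have hcball : ∀ (r : ℝ), 0 ≤ r →
      volume (Metric.closedBall (0 : EuclideanSpace ℝ (Fin n)) r)
        = ENNReal.ofReal (r ^ n) * ω := by
    intro r hr
    rw [hωdef, Measure.addHaar_closedBall _ _ hr, finrank_euclideanSpace_fin]
  set V := volume (Metric.ball (0 : EuclideanSpace ℝ (Fin n)) ε) with hVdef
  have hV0 : 0 < V := Metric.measure_ball_pos _ _ hε0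
  have hVtop : V ≠ ⊤ := measure_ball_lt_top.ne
  have hVt0 : 0 < V.toReal := ENNReal.toReal_pos hV0.ne' hVtop
  set f : EuclideanSpace ℝ (Fin n) → ℝ :=
    (Metric.ball (0 : EuclideanSpace ℝ (Fin n)) ε).indicator (fun _ => V.toReal⁻¹) with hfdef
  set g : EuclideanSpace ℝ (Fin n) → ℝ := fun _ => 1 with hgdef
  have hfint : Integrable f volume := by
    rw [hfdef]
    exact (integrableOn_const hVtop).integrable_indicator
      measurableSet_ball
  have hgmem : MemLp g ⊤ volume := memLp_top_const 1
  have hvol0 : (volume : Measure (EuclideanSpace ℝ (Fin n))) ≠ 0 := by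
    intro h
    rw [hωdef, h] at hω0
    simp at hω0
  have hgnorm : eLpNorm g ⊤ volume = 1 := by
    rw [hgdef, eLpNorm_exponent_top, eLpNormEssSup_const _ hvol0]
    simp
  have hfnorm : eLpNorm f 1 volume = 1 := by
    rw [eLpNorm_one_eq_lintegral_enorm]
    have h1 : ∀ x, ‖f x‖ₑ
        = (Metric.ball (0 : EuclideanSpace ℝ (Fin n)) ε).indicator
            (fun _ => ENNReal.ofReal V.toReal⁻¹) x := by
      intro x
      by_cases hx : x ∈ Metric.ball (0 : EuclideanSpace ℝ (Fin n)) ε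
      · rw [hfdef, Set.indicator_of_mem hx, Set.indicator_of_mem hx,
          Real.enorm_eq_ofReal (by positivity)]
      · rw [hfdef, Set.indicator_of_notMem hx, Set.indicator_of_notMem hx]
        simp
    rw [lintegral_congr h1, lintegral_indicator measurableSet_ball _,
      setLIntegral_const, ← hVdef, ← ENNReal.ofReal_toReal hVtop,
      ← ENNReal.ofReal_mul (by positivity), ENNReal.ofReal_toReal hVtop,
      inv_mul_cancel₀ hVt0.ne']
    simp
  -- pointwise lower bound for J
  have hJeq : ∀ x, (∫ y, G y * f (x - y) * g (x + y))
      = ∫ y in Metric.ball x ε, G y * V.toReal⁻¹ := by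
    intro x
    have h1 : (fun y => G y * f (x - y) * g (x + y))
        = (Metric.ball x ε).indicator (fun y => G y * V.toReal⁻¹) := by
      funext y
      by_cases hy : y ∈ Metric.ball x ε
      · have hxy : x - y ∈ Metric.ball (0 : EuclideanSpace ℝ (Fin n)) ε := by
          rw [mem_ball_zero_iff]
          rw [Metric.mem_ball] at hy
          calc ‖x - y‖ = dist x y := (dist_eq_norm _ _).symm
            _ = dist y x := dist_comm _ _
            _ < ε := hy
        rw [Set.indicator_of_mem hy, hfdef, Set.indicator_of_mem hxy, hgdef]
        ring
      · have hxy : x - y ∉ Metric.ball (0 : EuclideanSpace ℝ (Fin n)) ε := by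
          rw [mem_ball_zero_iff]
          rw [Metric.mem_ball] at hy
          intro h
          apply hy
          calc dist y x = dist x y := dist_comm _ _
            _ = ‖x - y‖ := dist_eq_norm _ _
            _ < ε := h
        rw [Set.indicator_of_notMem hy, hfdef, Set.indicator_of_notMem hxy]
        simp
    rw [h1, integral_indicator measurableSet_ball]
  have hJlow : ∀ x : EuclideanSpace ℝ (Fin n), 2*ε < ‖x‖ → ‖x‖ ≤ 1/2 →
      c₁ * ‖x‖ ^ (s - (n:ℝ)) ≤ ∫ y, G y * f (x - y) * g (x + y) := by
    intro x hx1 hx2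
    rw [hJeq x]
    have hε14 : ε < 1/4 := by linarith
    have key : ∀ y ∈ Metric.ball x ε,
        c₁ * ‖x‖ ^ (s - (n:ℝ)) * V.toReal⁻¹ ≤ G y * V.toReal⁻¹ := by
      intro y hy
      rw [Metric.mem_ball] at hy
      have hd : ‖x - y‖ < ε := by
        calc ‖x - y‖ = dist x y := (dist_eq_norm _ _).symm
          _ = dist y x := dist_comm _ _
          _ < ε := hy
      have hxy1 : ‖x‖ - ‖y‖ ≤ ‖x - y‖ := norm_sub_norm_le _ _
      have hxy2 : ‖y‖ - ‖x‖ ≤ ‖x - y‖ := by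
        calc ‖y‖ - ‖x‖ ≤ ‖y - x‖ := norm_sub_norm_le _ _
          _ = ‖x - y‖ := norm_sub_rev _ _
      have hy0 : 0 < ‖y‖ := by linarith
      have hy1 : ‖y‖ ≤ 1 := by linarith
      have hy3 : ‖y‖ ≤ 2 * ‖x‖ := by linarith
      have hG : c₁ * ‖x‖ ^ (s - (n:ℝ)) ≤ G y := by
        have h1 : (2*‖x‖) ^ (s - (n:ℝ)) ≤ ‖y‖ ^ (s - (n:ℝ)) :=
          Real.rpow_le_rpow_of_nonpos hy0 hy3 (by linarith)
        have h2 : ((2:ℝ)*‖x‖) ^ (s - (n:ℝ)) = 2 ^ (s-(n:ℝ)) * ‖x‖ ^ (s-(n:ℝ)) :=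
          Real.mul_rpow (by norm_num) (norm_nonneg x)
        have h3 := hGlow y hy0 hy1
        calc c₁ * ‖x‖ ^ (s - (n:ℝ)) = c * ((2*‖x‖) ^ (s - (n:ℝ))) := by
              rw [h2, hc₁def]; ring
          _ ≤ c * ‖y‖ ^ (s-(n:ℝ)) := mul_le_mul_of_nonneg_left h1 hc.le
          _ ≤ G y := h3
      exact mul_le_mul_of_nonneg_right hG (inv_nonneg.mpr ENNReal.toReal_nonneg)
    have hint : IntegrableOn (fun y => G y * V.toReal⁻¹) (Metric.ball x ε) volume :=
      (hGint.mul_const _).integrableOn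
    have hVx : volume (Metric.ball x ε) = V := by
      rw [hball x ε hε0.le, hVdef, hball 0 ε hε0.le]
    have h4 := setIntegral_ge_of_const_le_real measurableSet_ball
      (by rw [hVx]; exact hVtop) key hint
    rw [measureReal_def, hVx] at h4
    calc c₁ * ‖x‖ ^ (s-(n:ℝ))
        = c₁ * ‖x‖ ^ (s-(n:ℝ)) * V.toReal⁻¹ * V.toReal := by
          field_simp
      _ ≤ _ := h4
  -- interval of t
  set A := w * (2*ε)^n with hAdef
  set B := w * (1/2:ℝ)^n / 2 with hBdef
  have hA0 : 0 < A := by positivity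
  have hB0 : 0 < B := by positivity
  have h2ε : (2:ℝ)*ε = (1/2) * Real.exp (-(M+1)) := by rw [hεdef]; ring
  have hA' : A = w * (1/2:ℝ)^n * Real.exp (-((n:ℝ)*(M+1))) := by
    rw [hAdef, h2ε, mul_pow, ← Real.exp_nat_mul]
    ring_nf
  have hexp1 : Real.exp (-((n:ℝ)*(M+1))) < 1/2 := by
    have h1 : Real.exp (-((n:ℝ)*(M+1))) ≤ Real.exp (-1) := by
      apply Real.exp_le_exp.mpr
      have : (1:ℝ) ≤ (n:ℝ) := by exact_mod_cast hn
      nlinarith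
    have h2 : Real.exp (-1) < 1/2 := by
      have h3 : (2:ℝ) < Real.exp 1 := by
        have := Real.exp_one_gt_d9
        linarith
      rw [Real.exp_neg, show (1:ℝ)/2 = 2⁻¹ by norm_num,
        inv_lt_inv₀ (Real.exp_pos 1) two_pos]
      exact h3
    linarith
  have hAB : A < B := by
    rw [hA', hBdef]
    have : w * (1/2:ℝ)^n * Real.exp (-((n:ℝ)*(M+1))) < w * (1/2:ℝ)^n * (1/2) := by
      apply mul_lt_mul_of_pos_left hexp1 (by positivity)
    linarith [this]
  have hBA : B / A = Real.exp ((n:ℝ)*(M+1)) / 2 := by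
    rw [hA', hBdef, Real.exp_neg]
    field_simp
  have hlogBA : M < Real.log (B/A) := by
    rw [hBA, Real.log_div (Real.exp_ne_zero _) two_ne_zero, Real.log_exp]
    have hlog2 : Real.log 2 < 1 := by
      have := Real.log_two_lt_d9
      linarith
    have hn1 : (1:ℝ) ≤ (n:ℝ) := by exact_mod_cast hn
    nlinarith
  -- rearrangement lower bound
  set J := fun x => ∫ y, G y * f (x - y) * g (x + y) with hJdef
  have hrear : ∀ t : ℝ, t ∈ Set.Ioo A B →
      ENNReal.ofReal (c₂ * t ^ ((s-(n:ℝ))/(n:ℝ))) ≤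
        rearrangement volume J (ENNReal.ofReal t) := by
    intro t ht
    have ht0 : 0 < t := hA0.trans ht.1
    set r := (2*t/w) ^ ((n:ℝ)⁻¹) with hrdef
    have h2tw : 0 < 2*t/w := by positivity
    have hr0 : 0 < r := Real.rpow_pos_of_pos h2tw _
    have hrn : r ^ n = 2*t/w := by
      rw [hrdef, ← Real.rpow_natCast ((2*t/w) ^ ((n:ℝ)⁻¹)) n,
        ← Real.rpow_mul h2tw.le, inv_mul_cancel₀ hn0.ne', Real.rpow_one]
    have hr2ε : 2*ε < r := by
      by_contra hcon
      push_neg at hcon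
      have h1 : r^n ≤ (2*ε)^n := pow_le_pow_left₀ hr0.le hcon n
      rw [hrn] at h1
      have h2 : 2*t ≤ A := by
        rw [hAdef]
        calc 2*t = (2*t/w) * w := by field_simp
          _ ≤ (2*ε)^n * w := mul_le_mul_of_nonneg_right h1 hw0.le
          _ = w * (2*ε)^n := mul_comm _ _
      linarith [ht.1]
    have hr12 : r ≤ 1/2 := by
      have h1 : r^n ≤ (1/2:ℝ)^n := by
        rw [hrn, div_le_iff₀ hw0]
        have h2 : (2:ℝ)*t ≤ (1/2:ℝ)^n * w := by nlinarith [ht.2]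
        linarith
      exact (pow_le_pow_iff_left₀ hr0.le (by norm_num) hn.ne').mp h1
    have hcr : c₂ * t ^ ((s-(n:ℝ))/(n:ℝ)) = c₁ * r ^ (s - (n:ℝ)) := by
      rw [hrdef, ← Real.rpow_mul h2tw.le]
      rw [show (n:ℝ)⁻¹ * (s - (n:ℝ)) = (s-(n:ℝ))/(n:ℝ) by ring]
      rw [show 2*t/w = (2/w)*t by ring, Real.mul_rpow (by positivity) ht0.le, hc₂def]
      ring
    rw [rearrangement]
    refine le_sInf ?_
    intro l hl
    by_contra hcon
    push_neg at hcon
    have hsub : Metric.ball (0:EuclideanSpace ℝ (Fin n)) r \ Metric.closedBall 0 (2*ε)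
        ⊆ {x | l < ENNReal.ofReal |J x|} := by
      intro x hx
      obtain ⟨hxr, hxε⟩ := hx
      rw [Metric.mem_ball, dist_zero_right] at hxr
      rw [Metric.mem_closedBall, dist_zero_right] at hxε
      push_neg at hxε
      have hJx := hJlow x hxε (hxr.le.trans hr12)
      have hmono : r ^ (s-(n:ℝ)) ≤ ‖x‖ ^ (s-(n:ℝ)) :=
        Real.rpow_le_rpow_of_nonpos (by linarith) hxr.le (by linarith)
      refine lt_of_lt_of_le hcon ?_
      rw [hcr]
      refine ENNReal.ofReal_le_ofReal ?_
      calc c₁ * r ^ (s-(n:ℝ)) ≤ c₁ * ‖x‖ ^ (s-(n:ℝ)) :=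
            mul_le_mul_of_nonneg_left hmono hc₁0.le
        _ ≤ J x := hJx
        _ ≤ |J x| := le_abs_self _
    have hmeas : ENNReal.ofReal t
        < volume (Metric.ball (0:EuclideanSpace ℝ (Fin n)) r \ Metric.closedBall 0 (2*ε)) := by
      rw [measure_diff (Metric.closedBall_subset_ball hr2ε)
        measurableSet_closedBall.nullMeasurableSet measure_closedBall_lt_top.ne]
      rw [hball _ _ hr0.le, hcball _ (by positivity), hωw,
        ← ENNReal.ofReal_mul (by positivity), ← ENNReal.ofReal_mul (by positivity),
        ← ENNReal.ofReal_sub _ (by positivity)]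
      rw [ENNReal.ofReal_lt_ofReal_iff ?_]
      · have h1 : r^n * w = 2*t := by rw [hrn]; field_simp
        have h2 : (2*ε)^n * w = A := by rw [hAdef]; ring
        rw [h1, h2]
        linarith [ht.1]
      · have h1 : r^n * w = 2*t := by rw [hrn]; field_simp
        have h2 : (2*ε)^n * w = A := by rw [hAdef]; ring
        rw [h1, h2]
        linarith [ht.1]
    exact absurd ((measure_mono hsub).trans hl) (not_le.mpr hmeas)
  have hαtop : (ENNReal.ofReal α) ≠ ⊤ := ofReal_ne_top
  have hαtR : (ENNReal.ofReal α).toReal = α := ENNReal.toReal_ofReal hα.le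
  have hintinv : IntegrableOn (fun t : ℝ => t⁻¹) (Set.Ioo A B) volume := by
    have hcont : ContinuousOn (fun t : ℝ => t⁻¹) (Set.Icc A B) :=
      ContinuousOn.inv₀ continuousOn_id fun x hx => (hA0.trans_le hx.1).ne'
    exact (hcont.integrableOn_compact isCompact_Icc).mono_set Set.Ioo_subset_Icc_self
  have hlog : ∫⁻ t in Set.Ioo A B, ENNReal.ofReal t⁻¹ = ENNReal.ofReal (Real.log (B/A)) := by
    rw [← ofReal_integral_eq_lintegral_ofReal hintinv
      ((ae_restrict_iff' measurableSet_Ioo).mpr (ae_of_all _ fun t ht =>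
        inv_nonneg.mpr (hA0.trans ht.1).le))]
    congr 1
    rw [← MeasureTheory.integral_Ioc_eq_integral_Ioo,
      ← intervalIntegral.integral_of_le hAB.le, integral_inv_of_pos hA0 hB0]
  have hq : 1/((n:ℝ)/((n:ℝ)-s)) = ((n:ℝ)-s)/(n:ℝ) := one_div_div _ _
  have hlor : ENNReal.ofReal (c₂ ^ α * Real.log (B/A)) ^ (1/α) ≤
      lorentzNorm volume J ((n:ℝ)/((n:ℝ)-s)) (ENNReal.ofReal α) := by
    rw [lorentzNorm, if_neg hαtop, hαtR]
    refine ENNReal.rpow_le_rpow ?_ (by positivity)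
    have hpt : ∀ t ∈ Set.Ioo A B,
        ENNReal.ofReal (c₂ ^ α) * ENNReal.ofReal t⁻¹ ≤
          (ENNReal.ofReal t ^ (1/((n:ℝ)/((n:ℝ)-s))) *
            rearrangement volume J (ENNReal.ofReal t)) ^ α * ENNReal.ofReal t⁻¹ := by
      intro t ht
      have ht0 : 0 < t := hA0.trans ht.1
      refine mul_le_mul_left ?_ _
      have h2 : ENNReal.ofReal c₂ =
          ENNReal.ofReal t ^ (1/((n:ℝ)/((n:ℝ)-s))) *
            ENNReal.ofReal (c₂ * t ^ ((s-(n:ℝ))/(n:ℝ))) := by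
        rw [hq, ENNReal.ofReal_rpow_of_pos ht0, ← ENNReal.ofReal_mul (by positivity)]
        congr 1
        rw [show t ^ (((n:ℝ)-s)/(n:ℝ)) * (c₂ * t ^ ((s-(n:ℝ))/(n:ℝ)))
            = c₂ * (t ^ (((n:ℝ)-s)/(n:ℝ)) * t ^ ((s-(n:ℝ))/(n:ℝ))) from by ring,
          ← Real.rpow_add ht0,
          show ((n:ℝ)-s)/(n:ℝ) + (s-(n:ℝ))/(n:ℝ) = 0 by ring, Real.rpow_zero, mul_one]
      have h1 : ENNReal.ofReal c₂ ≤ ENNReal.ofReal t ^ (1/((n:ℝ)/((n:ℝ)-s))) *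
          rearrangement volume J (ENNReal.ofReal t) := by
        rw [h2]
        exact mul_le_mul_right (hrear t ht) _
      calc ENNReal.ofReal (c₂ ^ α) = ENNReal.ofReal c₂ ^ α :=
            (ENNReal.ofReal_rpow_of_pos hc₂0).symm
        _ ≤ _ := ENNReal.rpow_le_rpow h1 hα.le
    calc ENNReal.ofReal (c₂ ^ α * Real.log (B/A))
        = ENNReal.ofReal (c₂ ^ α) * ENNReal.ofReal (Real.log (B/A)) :=
          ENNReal.ofReal_mul (by positivity)
      _ = ENNReal.ofReal (c₂ ^ α) * ∫⁻ t in Set.Ioo A B, ENNReal.ofReal t⁻¹ := by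
          rw [hlog]
      _ = ∫⁻ t in Set.Ioo A B, ENNReal.ofReal (c₂ ^ α) * ENNReal.ofReal t⁻¹ := by
          rw [lintegral_const_mul' _ _ ofReal_ne_top]
      _ ≤ ∫⁻ t in Set.Ioo A B, (ENNReal.ofReal t ^ (1/((n:ℝ)/((n:ℝ)-s))) *
            rearrangement volume J (ENNReal.ofReal t)) ^ α * ENNReal.ofReal t⁻¹ :=
          lintegral_mono_ae ((ae_restrict_iff' measurableSet_Ioo).mpr
            (ae_of_all _ hpt))
      _ ≤ _ := lintegral_mono_set fun t ht => hA0.trans ht.1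
  have hmain := hbound f g hfint hgmem
  rw [hfnorm, hgnorm, mul_one, mul_one] at hmain
  have hCα : ENNReal.ofReal C = ENNReal.ofReal (C ^ α) ^ (1/α) := by
    rw [ENNReal.ofReal_rpow_of_pos (Real.rpow_pos_of_pos hC α), ← Real.rpow_mul hC.le,
      mul_one_div_cancel hα.ne', Real.rpow_one]
  have hlt : ENNReal.ofReal C < ENNReal.ofReal (c₂ ^ α * Real.log (B/A)) ^ (1/α) := by
    rw [hCα]
    refine ENNReal.rpow_lt_rpow ?_ (by positivity)
    rw [ENNReal.ofReal_lt_ofReal_iff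
      (mul_pos (Real.rpow_pos_of_pos hc₂0 α) (hM0.trans hlogBA))]
    have hCM : C ^ α = c₂ ^ α * M := by
      rw [hMdef, ← Real.mul_rpow hc₂0.le (by positivity)]
      congr 1
      field_simp
    rw [hCM]
    exact mul_lt_mul_of_pos_left hlogBA (Real.rpow_pos_of_pos hc₂0 α)
  exact absurd (hlor.trans hmain) (not_le.mpr hlt)
end
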